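/- Suppose a candidate orbit (z_n)_{n≥0} has {z_n : n ≥ 0} not dense in ℂ. Then there exist at least two distinct continuous maps f, g : ℂ → ℂ realising the orbit (in fact infinitely many). -/
import Mathlib


open Filter Topology

/-- A sequence of complex numbers is a *candidate orbit* if, whenever a
subsequence converges to a point `w`, the shifted subsequence converges to a
limit depending only on `w`. -/
def CandidateOrbit (z : ℕ → ℂ) : Prop :=
  ∀ w : ℂ, ∃ w' : ℂ, ∀ nj : ℕ → ℕ,
    Tendsto (fun j => z (nj j)) atTop (𝓝 w) →
    Tendsto (fun j => z (nj j + 1)) atTop (𝓝 w')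

theorem stmt_3 (z : ℕ → ℂ) (hz : CandidateOrbit z)
    (hnotdense : ¬ Dense (Set.range z)) :
    ∃ f g : ℂ → ℂ, f ≠ g ∧ Continuous f ∧ Continuous g ∧
      (∀ n : ℕ, f (z n) = z (n + 1)) ∧ (∀ n : ℕ, g (z n) = z (n + 1)) := by
  classical
  choose W hW using hz
  set S : Set ℂ := closure (Set.range z) with hSdef
  have hWz : ∀ n, W (z n) = z (n + 1) := by
    intro n
    have h1 := hW (z n) (fun _ => n) tendsto_const_nhds
    exact tendsto_nhds_unique h1 tendsto_const_nhds
  -- approximation lemma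
  have happrox : ∀ w ∈ S, ∀ ε > (0:ℝ), ∃ m : ℕ,
      dist (z m) w < ε ∧ dist (z (m+1)) (W w) < ε := by
    intro w hw ε hε
    have hseq : ∀ j : ℕ, ∃ m : ℕ, dist (z m) w < 1/(j+1) := by
      intro j
      have hpos : (0:ℝ) < 1/((j:ℝ)+1) := by positivity
      rcases Metric.mem_closure_iff.mp hw _ hpos with ⟨y, ⟨m, rfl⟩, hy⟩
      exact ⟨m, by rwa [dist_comm]⟩
    choose nj hnj using hseq
    have htend : Tendsto (fun j => z (nj j)) atTop (𝓝 w) := by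
      rw [tendsto_iff_dist_tendsto_zero]
      apply squeeze_zero (fun j => dist_nonneg) (fun j => (hnj j).le)
      exact tendsto_one_div_add_atTop_nhds_zero_nat
    have htend' := hW w nj htend
    have h1 : ∀ᶠ j in atTop, dist (z (nj j)) w < ε :=
      (Metric.tendsto_nhds.mp htend) ε hε
    have h2 : ∀ᶠ j in atTop, dist (z (nj j + 1)) (W w) < ε :=
      (Metric.tendsto_nhds.mp htend') ε hε
    rcases (h1.and h2).exists with ⟨j, hj1, hj2⟩
    exact ⟨nj j, hj1, hj2⟩
  -- continuity of W on S
  have hWcont : Continuous (fun x : S => W (x : ℂ)) := by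
    rw [continuous_iff_seqContinuous]
    intro u x hu
    have hu' : Tendsto (fun k => (u k : ℂ)) atTop (𝓝 (x:ℂ)) :=
      (continuous_subtype_val.tendsto x).comp hu
    have hch : ∀ k : ℕ, ∃ m : ℕ, dist (z m) ((u k : ℂ)) < 1/((k:ℝ)+1) ∧
        dist (z (m+1)) (W (u k : ℂ)) < 1/((k:ℝ)+1) := by
      intro k
      exact happrox (u k) (u k).2 (1/((k:ℝ)+1)) (by positivity)
    choose m hm1 hm2 using hch
    have hzero : Tendsto (fun k : ℕ => 1/((k:ℝ)+1)) atTop (𝓝 0) :=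
      tendsto_one_div_add_atTop_nhds_zero_nat
    have hzm : Tendsto (fun k => z (m k)) atTop (𝓝 (x:ℂ)) := by
      rw [tendsto_iff_dist_tendsto_zero]
      have hb : ∀ k, dist (z (m k)) (x:ℂ) ≤ 1/((k:ℝ)+1) + dist ((u k : ℂ)) (x:ℂ) :=
        fun k => (dist_triangle _ _ _).trans (by gcongr; exact (hm1 k).le)
      apply squeeze_zero (fun k => dist_nonneg) hb
      have hd : Tendsto (fun k => dist ((u k : ℂ)) (x:ℂ)) atTop (𝓝 0) :=
        tendsto_iff_dist_tendsto_zero.mp hu'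
      simpa using hzero.add hd
    have hzm' := hW (x:ℂ) m hzm
    rw [tendsto_iff_dist_tendsto_zero]
    have hb : ∀ k, dist (W (u k : ℂ)) (W (x:ℂ)) ≤
        1/((k:ℝ)+1) + dist (z (m k + 1)) (W (x:ℂ)) := fun k => by
      calc dist (W (u k : ℂ)) (W (x:ℂ))
          ≤ dist (W (u k : ℂ)) (z (m k + 1)) + dist (z (m k + 1)) (W (x:ℂ)) :=
            dist_triangle _ _ _
        _ ≤ 1/((k:ℝ)+1) + dist (z (m k + 1)) (W (x:ℂ)) := by
            gcongr; rw [dist_comm]; exact (hm2 k).le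
    apply squeeze_zero (fun k => dist_nonneg) hb
    have hd : Tendsto (fun k => dist (z (m k + 1)) (W (x:ℂ))) atTop (𝓝 0) :=
      tendsto_iff_dist_tendsto_zero.mp hzm'
    simpa using hzero.add hd
  -- Tietze extension
  obtain ⟨F, hF⟩ := (⟨_, hWcont⟩ : C(S, ℂ)).exists_restrict_eq isClosed_closure
  have hFz : ∀ n, F (z n) = z (n + 1) := by
    intro n
    have hmem : z n ∈ S := subset_closure ⟨n, rfl⟩
    have := congrFun (congrArg (fun g : C(S, ℂ) => (g : S → ℂ)) hF) ⟨z n, hmem⟩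
    simpa [hWz n] using this
  -- a point and ball outside S
  have : ∃ c : ℂ, c ∉ S := by
    by_contra h
    push_neg at h
    exact hnotdense (by rw [dense_iff_closure_eq]; exact Set.eq_univ_of_forall h)
  obtain ⟨c, hc⟩ := this
  obtain ⟨r, hr, hball⟩ := Metric.isOpen_iff.mp isClosed_closure.isOpen_compl c hc
  -- bump
  set b : ℂ → ℂ := fun x => ((max 0 (r - dist x c) : ℝ) : ℂ) with hbdef
  have hbcont : Continuous b := by
    apply Complex.continuous_ofReal.comp
    exact continuous_const.max (continuous_const.sub ((continuous_id.dist continuous_const)))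
  have hbS : ∀ x ∈ S, b x = 0 := by
    intro x hx
    have hdist : r ≤ dist x c := by
      by_contra hlt
      push_neg at hlt
      exact (hball (Metric.mem_ball.mpr hlt)) hx
    have h0 : r - dist x c ≤ 0 := by linarith
    simp [hbdef, max_eq_left h0]
  refine ⟨F, fun x => F x + b x, ?_, F.continuous, F.continuous.add hbcont, hFz, ?_⟩
  · intro h
    have := congrFun h c
    have hbc : b c = (r : ℂ) := by simp [hbdef, max_eq_right hr.le]
    rw [hbc] at this
    have : (r : ℂ) = 0 := by linear_combination -this
    exact hr.ne' (by exact_mod_cast this)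
  · intro n
    have hmem : z n ∈ S := subset_closure ⟨n, rfl⟩
    show F (z n) + b (z n) = z (n + 1)
    rw [hbS _ hmem, add_zero, hFz]
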